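/- With counting functions z_A(n) = #{j ≤ n : t(j)=1}, z_B(n) = #{j ≤ n : t(j)=0}, z_C(n) = #{j ≤ n : t(j)=2} for the infinite tribonacci word t, one has z_A(n) = 2B(n+1) − A(n+1) + 1, z_B(n) = A(n+1) − B(n+1) − (n+2), and z_C(n) = 2(n+1) − B(n+1) for all n ≥ −1. -/

import Mathlib

/-- The tribonacci substitution on letters: 0 ↦ 01, 1 ↦ 02, 2 ↦ 0. -/
def sigmaW : ℕ → List ℕ
  | 0 => [0, 1]
  | 1 => [0, 2]
  | _ => [0]

/-- The substitution extended to words (concatenation homomorphism). -/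
def sigmaL (w : List ℕ) : List ℕ := w.flatMap sigmaW

/-- The infinite tribonacci word t = 0,1,0,2,0,1,0,0,1,0,2,...,
the fixed point of the substitution starting from 0. -/
def t (n : ℕ) : ℕ := (sigmaL^[n + 1] [0]).getD n 0

/-- A(n): position of the (n+1)-st occurrence of the letter 1 in t. -/
noncomputable def A (n : ℕ) : ℕ := Nat.nth (fun k => t k = 1) n

/-- B(n): position of the (n+1)-st occurrence of the letter 0 in t. -/
noncomputable def B (n : ℕ) : ℕ := Nat.nth (fun k => t k = 0) n

/-- C(n): position of the (n+1)-st occurrence of the letter 2 in t. -/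
noncomputable def C (n : ℕ) : ℕ := Nat.nth (fun k => t k = 2) n

namespace TribAux

/-! ### Basic facts about sigmaW / sigmaL -/

lemma sigmaW_len_pos (x : ℕ) : 1 ≤ (sigmaW x).length := by
  match x with
  | 0 => simp [sigmaW]
  | 1 => simp [sigmaW]
  | n+2 => simp [sigmaW]

lemma sigmaL_nil : sigmaL [] = [] := rfl

lemma sigmaL_cons (a : ℕ) (l : List ℕ) : sigmaL (a :: l) = sigmaW a ++ sigmaL l := by
  simp [sigmaL]

lemma sigmaL_append (u v : List ℕ) : sigmaL (u ++ v) = sigmaL u ++ sigmaL v := by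
  simp [sigmaL]

lemma sigmaL_prefix {u v : List ℕ} (h : u <+: v) : sigmaL u <+: sigmaL v := by
  obtain ⟨w, rfl⟩ := h
  exact ⟨sigmaL w, (sigmaL_append u w).symm⟩

lemma sigmaL_length_ge (w : List ℕ) : w.length ≤ (sigmaL w).length := by
  induction w with
  | nil => simp
  | cons a l ih =>
    rw [sigmaL_cons, List.length_append]
    have := sigmaW_len_pos a
    simp only [List.length_cons]
    omega

/-! ### The approximation words W n -/

def W (n : ℕ) : List ℕ := sigmaL^[n] [0]

lemma W_succ (n : ℕ) : W (n + 1) = sigmaL (W n) := Function.iterate_succ_apply' _ _ _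

lemma t_def (n : ℕ) : t n = (W (n + 1)).getD n 0 := rfl

lemma W_prefix_succ (n : ℕ) : W n <+: W (n + 1) := by
  induction n with
  | zero => exact ⟨[1], rfl⟩
  | succ k ih => rw [W_succ, W_succ]; exact sigmaL_prefix ih

lemma W_prefix {a b : ℕ} (h : a ≤ b) : W a <+: W b := by
  induction h with
  | refl => exact List.prefix_refl _
  | step _ ih => exact ih.trans (W_prefix_succ _)

lemma zero_prefix (n : ℕ) : [0] <+: W n := W_prefix (Nat.zero_le n)

lemma W_length (n : ℕ) : n + 1 ≤ (W n).length := by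
  induction n with
  | zero => simp [W]
  | succ k ih =>
    obtain ⟨r, hr⟩ := zero_prefix k
    have h1 : (W k).length = 1 + r.length := by rw [← hr]; simp; omega
    have h2 : W (k + 1) = sigmaW 0 ++ sigmaL r := by
      rw [W_succ, ← hr]
      show sigmaL ([0] ++ r) = _
      rw [sigmaL_append]; rfl
    have h3 := sigmaL_length_ge r
    rw [h2, List.length_append]
    simp only [sigmaW]
    simp only [List.length_cons, List.length_nil]
    omega

lemma getD_prefix {u v : List ℕ} (h : u <+: v) {i : ℕ} (hi : i < u.length) :
    v.getD i 0 = u.getD i 0 := by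
  rw [List.getD_eq_getElem _ _ hi, List.getD_eq_getElem _ _ (hi.trans_le h.length_le)]
  exact (h.getElem hi).symm

lemma t_eq_W {N n : ℕ} (h : n < (W N).length) : (W N).getD n 0 = t n := by
  rcases le_total N (n + 1) with hN | hN
  · rw [t_def]
    exact (getD_prefix (W_prefix hN) h).symm
  · rw [t_def]
    have hn : n < (W (n + 1)).length := by have := W_length (n + 1); omega
    exact getD_prefix (W_prefix hN) hn

lemma W_getElem {N i : ℕ} (h : i < (W N).length) : (W N)[i] = t i := by
  rw [← List.getD_eq_getElem _ 0 h]; exact t_eq_W h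

/-! ### Prefixes of t as lists -/

def L (n : ℕ) : List ℕ := (List.range n).map t

lemma L_length (n : ℕ) : (L n).length = n := by simp [L]

lemma L_getElem {n i : ℕ} (h : i < n) : (L n)[i]'(by simpa [L] using h) = t i := by
  simp [L]

lemma eq_L_of_prefix_W {u : List ℕ} {N : ℕ} (h : u <+: W N) : u = L u.length := by
  apply List.ext_getElem (by simp [L])
  intro i h1 h2
  rw [h.getElem h1, W_getElem (h1.trans_le h.length_le)]
  exact (L_getElem (by simpa [L] using h2)).symm

lemma L_prefix_W (m : ℕ) : L m <+: W m := by
  have h := List.take_prefix m (W m)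
  have hl : ((W m).take m).length = m := by
    rw [List.length_take]
    exact min_eq_left (le_trans (Nat.le_succ m) (W_length m))
  have h2 := eq_L_of_prefix_W h
  rw [hl] at h2
  rw [← h2]; exact h

/-! ### The block-start positions p -/

def p (m : ℕ) : ℕ := (sigmaL (L m)).length

lemma sigmaL_L (m : ℕ) : sigmaL (L m) = L (p m) := by
  have h1 : sigmaL (L m) <+: W (m + 1) := by
    rw [W_succ]; exact sigmaL_prefix (L_prefix_W m)
  exact eq_L_of_prefix_W h1

lemma L_succ (m : ℕ) : L (m + 1) = L m ++ [t m] := by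
  simp [L, List.range_succ]

lemma sigmaL_L_succ (m : ℕ) : sigmaL (L (m + 1)) = sigmaL (L m) ++ sigmaW (t m) := by
  rw [L_succ, sigmaL_append]
  simp [sigmaL]

lemma p_succ (m : ℕ) : p (m + 1) = p m + (sigmaW (t m)).length := by
  show (sigmaL (L (m+1))).length = _
  rw [sigmaL_L_succ, List.length_append]; rfl

lemma t_block {m i : ℕ} (hi : i < (sigmaW (t m)).length) :
    t (p m + i) = (sigmaW (t m))[i] := by
  have e : L (p (m + 1)) = sigmaL (L m) ++ sigmaW (t m) := by
    rw [← sigmaL_L, sigmaL_L_succ]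
  have hk : p m + i < p (m + 1) := by rw [p_succ m]; omega
  have h1 : (L (p (m + 1)))[p m + i]'(by rw [L_length]; exact hk) = t (p m + i) :=
    L_getElem hk
  rw [← h1]
  have hlen : (sigmaL (L m)).length = p m := rfl
  rw [List.getElem_of_eq e, List.getElem_append_right (by omega)]
  congr 1
  omega

lemma t_p (m : ℕ) : t (p m) = 0 := by
  have h := t_block (m := m) (i := 0) (by have := sigmaW_len_pos (t m); omega)
  rw [Nat.add_zero] at h
  rw [h]
  have key : ∀ x (hx : 0 < (sigmaW x).length), (sigmaW x)[0] = 0 := by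
    intro x hx
    match x with
    | 0 => simp [sigmaW]
    | 1 => simp [sigmaW]
    | n+2 => simp [sigmaW]
  exact key _ _

lemma t_p1_of0 {m : ℕ} (h : t m = 0) : t (p m + 1) = 1 := by
  have h1 := t_block (m := m) (i := 1) (by rw [h]; simp [sigmaW])
  rw [h1]
  simp [h, sigmaW]

/-! ### Letters are in {0,1,2} -/

lemma mem_sigmaW {x y : ℕ} (h : y ∈ sigmaW x) : y = 0 ∨ y = 1 ∨ y = 2 := by
  match x with
  | 0 => simp [sigmaW] at h; omega
  | 1 => simp [sigmaW] at h; omega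
  | n+2 => simp [sigmaW] at h; omega

lemma t_mem (n : ℕ) : t n = 0 ∨ t n = 1 ∨ t n = 2 := by
  have h : n < (W (n + 1)).length := by have := W_length (n + 1); omega
  have he : t n = (W (n + 1))[n] := (W_getElem h).symm
  have hall : ∀ x ∈ W (n + 1), x = 0 ∨ x = 1 ∨ x = 2 := by
    rw [W_succ]
    intro x hx
    obtain ⟨y, _, hy⟩ := List.mem_flatMap.mp hx
    exact mem_sigmaW hy
  have hx := hall _ (List.getElem_mem h)
  omega

/-! ### Counting letters -/

lemma count_sigmaL0 (w : List ℕ) : (sigmaL w).count 0 = w.length := by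
  induction w with
  | nil => rfl
  | cons a l ih =>
    rw [sigmaL_cons, List.count_append, ih]
    match a with
    | 0 => simp [sigmaW]; omega
    | 1 => simp [sigmaW]; omega
    | n+2 => simp [sigmaW]; omega

lemma count_sigmaL1 (w : List ℕ) : (sigmaL w).count 1 = w.count 0 := by
  induction w with
  | nil => rfl
  | cons a l ih =>
    rw [sigmaL_cons, List.count_append, ih, List.count_cons]
    match a with
    | 0 => simp [sigmaW]; all_goals omega
    | 1 => simp [sigmaW]; all_goals omega
    | n+2 => simp [sigmaW]; all_goals omega

lemma count_sigmaL2 (w : List ℕ) : (sigmaL w).count 2 = w.count 1 := by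
  induction w with
  | nil => rfl
  | cons a l ih =>
    rw [sigmaL_cons, List.count_append, ih, List.count_cons]
    match a with
    | 0 => simp [sigmaW]; all_goals omega
    | 1 => simp [sigmaW]; all_goals omega
    | n+2 => simp [sigmaW]; all_goals omega

lemma length_sigmaL (w : List ℕ) (h : ∀ x ∈ w, x = 0 ∨ x = 1 ∨ x = 2) :
    (sigmaL w).length + w.count 2 = 2 * w.length := by
  induction w with
  | nil => rfl
  | cons a l ih =>
    have ha := h a (List.mem_cons_self)
    have ihl := ih (fun x hx => h x (List.mem_cons_of_mem a hx))
    rw [sigmaL_cons, List.length_append, List.count_cons]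
    rcases ha with rfl | rfl | rfl <;> simp [sigmaW] <;> omega

lemma count_total (w : List ℕ) (h : ∀ x ∈ w, x = 0 ∨ x = 1 ∨ x = 2) :
    w.count 0 + w.count 1 + w.count 2 = w.length := by
  induction w with
  | nil => rfl
  | cons a l ih =>
    have ha := h a (List.mem_cons_self)
    have ihl := ih (fun x hx => h x (List.mem_cons_of_mem a hx))
    simp only [List.count_cons, List.length_cons]
    rcases ha with rfl | rfl | rfl <;> simp <;> omega

def cnt (ℓ n : ℕ) : ℕ := ((Finset.range n).filter (fun j => t j = ℓ)).card

lemma cnt_eq (ℓ n : ℕ) : cnt ℓ n = (L n).count ℓ := by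
  induction n with
  | zero => simp [cnt, L]
  | succ k ih =>
    rw [L_succ, List.count_append, ← ih]
    unfold cnt
    rw [Finset.range_add_one, Finset.filter_insert]
    by_cases h : t k = ℓ
    · rw [if_pos h, Finset.card_insert_of_notMem (by simp)]
      simp [h]
    · rw [if_neg h]
      simp [List.count_cons, h]

lemma L_mem (n : ℕ) : ∀ x ∈ L n, x = 0 ∨ x = 1 ∨ x = 2 := by
  intro x hx
  simp only [L, List.mem_map] at hx
  obtain ⟨j, _, rfl⟩ := hx
  exact t_mem j

lemma cnt0_p (m : ℕ) : cnt 0 (p m) = m := by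
  rw [cnt_eq, ← sigmaL_L, count_sigmaL0, L_length]

lemma cnt1_p (m : ℕ) : cnt 1 (p m) = cnt 0 m := by
  rw [cnt_eq, ← sigmaL_L, count_sigmaL1, cnt_eq]

lemma cnt2_p (m : ℕ) : cnt 2 (p m) = cnt 1 m := by
  rw [cnt_eq, ← sigmaL_L, count_sigmaL2, cnt_eq]

lemma p_formula (m : ℕ) : p m + cnt 2 m = 2 * m := by
  have := length_sigmaL (L m) (L_mem m)
  rw [L_length] at this
  rw [cnt_eq]
  exact this

lemma cnt_total (m : ℕ) : cnt 0 m + cnt 1 m + cnt 2 m = m := by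
  have := count_total (L m) (L_mem m)
  rw [L_length] at this
  rw [cnt_eq, cnt_eq, cnt_eq]
  exact this

/-! ### Identifying A and B -/

lemma B_eq (m : ℕ) : B m = p m := by
  have h0 : t (p m) = 0 := t_p m
  have h := Nat.nth_count (p := fun k => t k = 0) h0
  rw [Nat.count_eq_card_filter_range] at h
  have : ((Finset.range (p m)).filter (fun k => t k = 0)).card = m := cnt0_p m
  rw [this] at h
  exact h

lemma A_eq (m : ℕ) : A m = p (p m) + 1 := by
  have h1 : t (p (p m) + 1) = 1 := t_p1_of0 (t_p m)
  have h := Nat.nth_count (p := fun k => t k = 1) h1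
  have hc : Nat.count (fun k => t k = 1) (p (p m) + 1) = m := by
    rw [Nat.count_succ]
    rw [Nat.count_eq_card_filter_range]
    have e1 : ((Finset.range (p (p m))).filter (fun k => t k = 1)).card = cnt 1 (p (p m)) := rfl
    rw [e1, cnt1_p, cnt0_p]
    simp [t_p (p m)]
  rw [hc] at h
  exact h

end TribAux

/-- Counting functions: z_A(n) = 2B(n+1) − A(n+1) + 1, z_B(n) = A(n+1) − B(n+1) − (n+2),
z_C(n) = 2(n+1) − B(n+1), for all n ≥ −1. Here the index m = n+1 ranges over ℕ, and
the count of indices j ≤ n with a given letter equals the count of j < m. -/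
theorem counting_formulas (m : ℕ) :
    ((((Finset.range m).filter (fun j => t j = 1)).card : ℤ) = 2 * B m - A m + 1) ∧
    ((((Finset.range m).filter (fun j => t j = 0)).card : ℤ) = A m - B m - (m + 1)) ∧
    ((((Finset.range m).filter (fun j => t j = 2)).card : ℤ) = 2 * m - B m) := by
  open TribAux in
  have hB : B m = p m := B_eq m
  have hA : A m = p (p m) + 1 := A_eq m
  have h1 : cnt 2 (p m) = cnt 1 m := cnt2_p m
  have h2 : p (p m) + cnt 2 (p m) = 2 * p m := p_formula (p m)
  have h3 : p m + cnt 2 m = 2 * m := p_formula m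
  have h4 : cnt 0 m + cnt 1 m + cnt 2 m = m := cnt_total m
  have e0 : ((Finset.range m).filter (fun j => t j = 0)).card = cnt 0 m := rfl
  have e1 : ((Finset.range m).filter (fun j => t j = 1)).card = cnt 1 m := rfl
  have e2 : ((Finset.range m).filter (fun j => t j = 2)).card = cnt 2 m := rfl
  refine ⟨?_, ?_, ?_⟩ <;> simp only [e0, e1, e2, hA, hB] <;> push_cast <;> omega
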